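/- The Fibonacci word is not eventually periodic. -/

import Mathlib

/-- The Fibonacci substitution 0 → 01, 1 → 0 on words over {0,1}. -/
def fibSubst (l : List (Fin 2)) : List (Fin 2) :=
  l.flatMap fun a => if a = 0 then [0, 1] else [0]

/-- The Fibonacci word, fixed point of the substitution 0 → 01, 1 → 0 starting from 0. -/
def fibWord (n : ℕ) : Fin 2 := ((fibSubst^[n + 2]) [0]).getD n 0

namespace FibAux

def W (k : ℕ) : List (Fin 2) := fibSubst^[k] [0]

lemma fibSubst_append (a b : List (Fin 2)) : fibSubst (a ++ b) = fibSubst a ++ fibSubst b :=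
  List.flatMap_append ..

lemma W_succ (k : ℕ) : W (k+1) = fibSubst (W k) := Function.iterate_succ_apply' ..

lemma W_add_two (k : ℕ) : W (k+2) = W (k+1) ++ W k := by
  induction k with
  | zero => decide
  | succ n ih =>
    calc W (n+3) = fibSubst (W (n+2)) := W_succ _
    _ = fibSubst (W (n+1) ++ W n) := by rw [ih]
    _ = fibSubst (W (n+1)) ++ fibSubst (W n) := fibSubst_append ..
    _ = W (n+2) ++ W (n+1) := by rw [← W_succ, ← W_succ]

lemma W_prefix (k : ℕ) : W k <+: W (k+1) := by
  cases k with
  | zero => decide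
  | succ n => rw [W_add_two]; exact List.prefix_append _ _

lemma W_prefix_le {k m : ℕ} (h : k ≤ m) : W k <+: W m := by
  induction m with
  | zero => simp_all
  | succ n ih =>
    rcases Nat.lt_or_ge k (n+1) with h' | h'
    · exact (ih (Nat.lt_succ_iff.mp h')).trans (W_prefix n)
    · have : k = n+1 := le_antisymm h h'
      subst this; exact List.prefix_refl _

lemma length_W (k : ℕ) : (W k).length = Nat.fib (k+2) := by
  induction k using Nat.strong_induction_on with
  | _ k ih =>
    match k with
    | 0 => decide
    | 1 => decide
    | (n+2) =>
      rw [W_add_two, List.length_append, ih (n+1) (by omega), ih n (by omega)]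
      show Nat.fib (n+3) + Nat.fib (n+2) = Nat.fib (n+4)
      have : Nat.fib (n+4) = Nat.fib (n+2) + Nat.fib (n+3) := Nat.fib_add_two
      omega

lemma count_W (k : ℕ) : (W k).count 0 = Nat.fib (k+1) := by
  induction k using Nat.strong_induction_on with
  | _ k ih =>
    match k with
    | 0 => decide
    | 1 => decide
    | (n+2) =>
      rw [W_add_two, List.count_append, ih (n+1) (by omega), ih n (by omega)]
      show Nat.fib (n+2) + Nat.fib (n+1) = Nat.fib (n+3)
      have : Nat.fib (n+3) = Nat.fib (n+1) + Nat.fib (n+2) := Nat.fib_add_two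
      omega

lemma lt_fib (n : ℕ) : n < Nat.fib (n+4) := by
  induction n with
  | zero => decide
  | succ m ih =>
    have h2 : 1 ≤ Nat.fib (m+3) := Nat.fib_pos.mpr (by omega)
    have h3 : Nat.fib (m+5) = Nat.fib (m+3) + Nat.fib (m+4) := Nat.fib_add_two
    show m + 1 < Nat.fib (m+5)
    omega

lemma getD_prefix {k m n : ℕ} (h : k ≤ m) (hn : n < (W k).length) :
    (W m).getD n 0 = (W k).getD n 0 := by
  obtain ⟨t, ht⟩ := W_prefix_le h
  rw [← ht, List.getD_append _ _ _ _ hn]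

lemma getD_agree {k m n : ℕ} (hk : n < (W k).length) (hm : n < (W m).length) :
    (W k).getD n 0 = (W m).getD n 0 := by
  rcases le_total k m with h | h
  · exact (getD_prefix h hk).symm
  · exact getD_prefix h hm

lemma n_lt_length (n : ℕ) : n < (W (n+2)).length := by
  rw [length_W]; exact lt_fib n

lemma fibWord_getD {n m : ℕ} (hm : n < (W m).length) : fibWord n = (W m).getD n 0 :=
  getD_agree (n_lt_length n) hm

lemma map_range_eq_take {n m : ℕ} (h : n ≤ (W m).length) :
    (List.range n).map fibWord = (W m).take n := by
  apply List.ext_getElem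
  · simp [h]
  · intro i h1 h2
    simp only [List.getElem_map, List.getElem_range, List.getElem_take]
    have hi : i < (W m).length := lt_of_lt_of_le (by simpa using h1) h
    rw [fibWord_getD hi, List.getD_eq_getElem _ _ hi]

/-- Number of zeros among the first `n` letters of the Fibonacci word. -/
def Z (n : ℕ) : ℕ := ((List.range n).map fibWord).count 0

lemma Z_fib (k : ℕ) : Z (Nat.fib (k+2)) = Nat.fib (k+1) := by
  unfold Z
  rw [← length_W k, map_range_eq_take le_rfl, List.take_length, count_W]

lemma Z_succ (n : ℕ) : Z (n+1) = Z n + if fibWord n = 0 then 1 else 0 := by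
  unfold Z
  rw [List.range_succ, List.map_append, List.count_append]
  simp [List.count_singleton]

lemma Z_mono {n m : ℕ} (h : n ≤ m) : Z n ≤ Z m := by
  induction m with
  | zero => simp_all [Z]
  | succ k ih =>
    rcases Nat.lt_or_ge n (k+1) with h' | h'
    · exact le_trans (ih (Nat.lt_succ_iff.mp h')) (by rw [Z_succ]; omega)
    · have : n = k+1 := le_antisymm h h'
      simp [this]

/-- Key helper: a bounded integer sequence satisfying the Fibonacci recurrence cannot
have two consecutive positive values. -/
lemma no_two_pos (r : ℕ → ℤ) (hrec : ∀ k, r (k+2) = r (k+1) + r k)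
    (C K : ℕ) (hb : ∀ k ≥ K, (r k).natAbs ≤ C) {k : ℕ} (hk : K ≤ k) :
    ¬(0 < r k ∧ 0 < r (k+1)) := by
  rintro ⟨h0, h1⟩
  have grow : ∀ m, (Nat.fib (m+1) : ℤ) ≤ r (k+m) := by
    intro m
    induction m using Nat.strong_induction_on with
    | _ m ih =>
      match m with
      | 0 => simpa using (by omega : (1:ℤ) ≤ r k)
      | 1 => simpa using (by omega : (1:ℤ) ≤ r (k+1))
      | (n+2) =>
        have e1 : (Nat.fib (n+2) : ℤ) ≤ r (k+(n+1)) := ih (n+1) (by omega)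
        have e2 : (Nat.fib (n+1) : ℤ) ≤ r (k+n) := ih n (by omega)
        have h3 : Nat.fib (n+3) = Nat.fib (n+1) + Nat.fib (n+2) := Nat.fib_add_two
        have hr : r (k+(n+2)) = r (k+(n+1)) + r (k+n) := hrec (k+n)
        show (Nat.fib (n+3) : ℤ) ≤ r (k+(n+2))
        omega
  have h5 : C + 5 ≤ Nat.fib (C + 5) := Nat.le_fib_self (by omega)
  have hg := grow (C + 4)
  have hbb := hb (k + (C+4)) (by omega)
  rw [show C+4+1 = C+5 from rfl] at hg
  omega

lemma zero_propagates (r : ℕ → ℤ) (hrec : ∀ k, r (k+2) = r (k+1) + r k)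
    (C K : ℕ) (hb : ∀ k ≥ K, (r k).natAbs ≤ C) {k : ℕ} (hk : K ≤ k) (h0 : r k = 0) :
    r (k+1) = 0 := by
  by_contra hne
  have h2 : r (k+1+1) = r (k+1) := by
    have e : r (k+1+1) = r (k+1) + r k := hrec k
    omega
  rcases lt_or_gt_of_ne hne with hneg | hpos
  · have nn : ¬(0 < -(r (k+1)) ∧ 0 < -(r (k+1+1))) :=
      no_two_pos (fun j => -(r j))
        (fun j => by show -(r (j+2)) = -(r (j+1)) + -(r j); rw [hrec j]; ring) C K
        (fun j hj => by show (-(r j)).natAbs ≤ C; rw [Int.natAbs_neg]; exact hb j hj)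
        (by omega : K ≤ k+1)
    exact nn ⟨by omega, by omega⟩
  · exact no_two_pos r hrec C K hb (by omega : K ≤ k+1) ⟨hpos, by omega⟩

end FibAux

open FibAux

theorem fibWord_not_eventually_periodic :
    ¬ ∃ p : ℕ, 0 < p ∧ ∃ N : ℕ, ∀ n ≥ N, fibWord (n + p) = fibWord n := by
  rintro ⟨p, hp, N, hper⟩
  -- the number of zeros gained over one period, eventually constant
  set c : ℕ := Z (N + p) - Z N with hc
  have hcZ : Z (N + p) = Z N + c := by
    have := Z_mono (Nat.le_add_right N p); omega
  have Zstep : ∀ n ≥ N, Z (n + p) = Z n + c := by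
    intro n hn
    induction n, hn using Nat.le_induction with
    | base => exact hcZ
    | succ n hn ih =>
      have h1 : Z (n + 1 + p) = Z (n + p) + if fibWord (n+p) = 0 then 1 else 0 := by
        rw [show n+1+p = (n+p)+1 from by ring]; exact Z_succ (n+p)
      rw [h1, ih, Z_succ n, hper n hn]; ring
  -- the quantity p·Z(n) − c·n takes only finitely many values for n ≥ N
  set C : ℕ := (Finset.range p).sup
      (fun s => ((p : ℤ) * Z (N+s) - (c : ℤ) * (N+s)).natAbs) with hC
  have key : ∀ n ≥ N, ((p : ℤ) * Z n - (c : ℤ) * n).natAbs ≤ C := by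
    intro n hn
    have hsp : (n - N) % p < p := Nat.mod_lt _ hp
    have hn' : n = N + (n - N) % p + p * ((n - N) / p) := by
      have := Nat.div_add_mod (n - N) p; omega
    have eqv : ∀ s j, (p : ℤ) * Z (N + s + p * j) - (c : ℤ) * ((N : ℤ) + s + p * j)
        = (p : ℤ) * Z (N+s) - (c : ℤ) * ((N : ℤ) + s) := by
      intro s j
      induction j with
      | zero => simp
      | succ m ih =>
        have h1 : N + s + p * (m+1) = (N + s + p * m) + p := by ring
        rw [h1, Zstep _ (by omega)]
        push_cast
        push_cast at ih
        linarith [ih]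
    rw [hn']
    have hcast : ((N + (n-N) % p + p * ((n-N)/p) : ℕ) : ℤ)
        = (N : ℤ) + ((n-N) % p : ℕ) + (p : ℤ) * (((n-N)/p : ℕ) : ℤ) := by
      push_cast; ring
    rw [hcast, eqv]
    exact Finset.le_sup (f := fun s => ((p : ℤ) * Z (N+s) - (c : ℤ) * (N+s)).natAbs)
      (Finset.mem_range.mpr hsp)
  -- the integer sequence r k = p·fib(k+1) − c·fib(k+2)
  set r : ℕ → ℤ := fun k => (p : ℤ) * Nat.fib (k+1) - (c : ℤ) * Nat.fib (k+2) with hr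
  have hrec : ∀ k, r (k+2) = r (k+1) + r k := by
    intro k
    have h1 : Nat.fib (k+3) = Nat.fib (k+1) + Nat.fib (k+2) := Nat.fib_add_two
    have h2 : Nat.fib (k+4) = Nat.fib (k+2) + Nat.fib (k+3) := Nat.fib_add_two
    simp only [hr]
    push_cast [show k+2+1 = k+3 from rfl, show k+2+2 = k+4 from rfl,
      show k+1+1 = k+2 from rfl, show k+1+2 = k+3 from rfl, h1, h2]
    ring
  set K : ℕ := N + 3 with hK
  have hb : ∀ k ≥ K, (r k).natAbs ≤ C := by
    intro k hk
    have hfib : N ≤ Nat.fib (k+2) := by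
      have : k + 2 ≤ Nat.fib (k+2) := Nat.le_fib_self (by omega)
      omega
    have := key (Nat.fib (k+2)) hfib
    rwa [Z_fib k] at this
  -- Case 1: some r k = 0 with k ≥ K; then r vanishes from k on, forcing fib(j+2) ∣ p.
  by_cases hzero : ∃ k ≥ K, r k = 0
  · obtain ⟨k, hk, h0⟩ := hzero
    have hall : ∀ j ≥ k, r j = 0 := by
      intro j hj
      induction j, hj using Nat.le_induction with
      | base => exact h0
      | succ j hj ih => exact zero_propagates r hrec C K hb (by omega) ih
    -- choose j large: fib (j+2) > p, yet fib (j+2) ∣ p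
    set j : ℕ := k + p + 5 with hj
    have h0j : r j = 0 := hall j (by omega)
    have heq : p * Nat.fib (j+1) = c * Nat.fib (j+2) := by
      have : (p : ℤ) * Nat.fib (j+1) = (c : ℤ) * Nat.fib (j+2) := by
        simp only [hr] at h0j; linarith [h0j]
      exact_mod_cast this
    have hcop : (Nat.fib (j+2)).Coprime (Nat.fib (j+1)) :=
      (Nat.fib_coprime_fib_succ (j+1)).symm
    have hdvd : Nat.fib (j+2) ∣ p := by
      refine hcop.dvd_of_dvd_mul_right ?_
      exact ⟨c, by rw [heq, Nat.mul_comm]⟩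
    have hle : Nat.fib (j+2) ≤ p := Nat.le_of_dvd hp hdvd
    have : j + 2 ≤ Nat.fib (j+2) := Nat.le_fib_self (by omega)
    omega
  -- Case 2: r k ≠ 0 for all k ≥ K; then |r| strictly decreases in steps of two.
  · push_neg at hzero
    have hdesc : ∀ j ≥ K, (r (j+2)).natAbs < (r j).natAbs := by
      intro j hj
      have h0 := hzero j hj
      have h1 := hzero (j+1) (by omega)
      have h2 := hzero (j+2) (by omega)
      have e := hrec j
      have hnrec : ∀ i, -(r (i+2)) = -(r (i+1)) + -(r i) := fun i => by rw [hrec i]; ring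
      have hnb : ∀ i ≥ K, (-(r i)).natAbs ≤ C := fun i hi => by
        rw [Int.natAbs_neg]; exact hb i hi
      have np1 : ¬(0 < r j ∧ 0 < r (j+1)) := no_two_pos r hrec C K hb hj
      have np2 : ¬(0 < r (j+1) ∧ 0 < r (j+2)) :=
        no_two_pos r hrec C K hb (show K ≤ j+1 by omega)
      have nn1 : ¬(0 < -(r j) ∧ 0 < -(r (j+1))) :=
        no_two_pos (fun i => -(r i)) hnrec C K hnb hj
      have nn2 : ¬(0 < -(r (j+1)) ∧ 0 < -(r (j+2))) :=
        no_two_pos (fun i => -(r i)) hnrec C K hnb (show K ≤ j+1 by omega)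
      omega
    have hdown : ∀ m, (r (K + 2*m)).natAbs + m ≤ (r K).natAbs := by
      intro m
      induction m with
      | zero => simp
      | succ n ih =>
        have := hdesc (K + 2*n) (by omega)
        rw [show K + 2*(n+1) = (K + 2*n) + 2 from by ring]
        omega
    have hlast := hdown ((r K).natAbs + 1)
    have := hzero (K + 2*((r K).natAbs + 1)) (by omega)
    omega
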